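/- Propagation of positivity and monotonicity for the 1D Boussinesq system: Let T > 0 and let g, P ∈ C³([0,T]×[−π/4,π/4]) be a classical solution pair of the 1D Boussinesq system with g(t,·) odd and P(t,·) even for all t ∈ [0,T]. Assume that at t = 0: g(0,·) ≥ 0, ∂_θ g(0,·) ≥ 0, P(0,·) ≥ 0, ∂_θ P(0,·) ≥ 0, and P(0,·) + ∂_{θθ}P(0,·) ≥ 0 on [0,π/4]. Then, for every t ∈ [0,T], one has g(t,·) ≥ 0, ∂_θ g(t,·) ≥ 0, P(t,·) ≥ 0, ∂_θ P(t,·) ≥ 0, and P(t,·) + ∂_{θθ}P(t,·) ≥ 0 on [0,π/4]. -/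

import Mathlib

open Set Real MeasureTheory
open scoped ENNReal NNReal Topology

noncomputable section

/-- The interval `[-π/4, π/4]`. -/
def I14 : Set ℝ := Icc (-(π/4)) (π/4)

/-- A classical solution of the 1D Boussinesq system
`∂ₜ g + 2G ∂_θ g = sin θ · P + cos θ · ∂_θ P`, `∂ₜ P + 2G ∂_θ P = P ∂_θ G` on the time set
`J`, on the interval `[-π/4, π/4]`, where for each `t`, `G(t,·)` is the unique odd `C²`
function with `∂_{θθ} G + 4G = g(t,·)` and `G(t, ±π/4) = 0`; `g(t,·)` is odd and `P(t,·)`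
is even. -/
structure OneDSol (J : Set ℝ) (g P G : ℝ → ℝ → ℝ) : Prop where
  g_odd : ∀ t ∈ J, ∀ θ ∈ I14, g t (-θ) = - g t θ
  P_even : ∀ t ∈ J, ∀ θ ∈ I14, P t (-θ) = P t θ
  G_odd : ∀ t ∈ J, ∀ θ ∈ I14, G t (-θ) = - G t θ
  G_C2 : ∀ t ∈ J, ContDiffOn ℝ 2 (G t) I14
  G_eq : ∀ t ∈ J, ∀ θ ∈ I14, iteratedDerivWithin 2 (G t) I14 θ + 4 * G t θ = g t θ
  G_bc₁ : ∀ t ∈ J, G t (π/4) = 0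
  G_bc₂ : ∀ t ∈ J, G t (-(π/4)) = 0
  reg_g : ∀ t ∈ J, DifferentiableOn ℝ (g t) I14
  reg_P : ∀ t ∈ J, DifferentiableOn ℝ (P t) I14
  reg_gt : ∀ θ ∈ I14, ∀ t ∈ J, DifferentiableWithinAt ℝ (fun s => g s θ) J t
  reg_Pt : ∀ θ ∈ I14, ∀ t ∈ J, DifferentiableWithinAt ℝ (fun s => P s θ) J t
  eq_g : ∀ t ∈ J, ∀ θ ∈ I14,
    derivWithin (fun s => g s θ) J t + 2 * G t θ * derivWithin (g t) I14 θ
      = Real.sin θ * P t θ + Real.cos θ * derivWithin (P t) I14 θ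
  eq_P : ∀ t ∈ J, ∀ θ ∈ I14,
    derivWithin (fun s => P s θ) J t + 2 * G t θ * derivWithin (P t) I14 θ
      = P t θ * derivWithin (G t) I14 θ

/-- Sup-norm over `[-π/4, π/4]`, valued in `ℝ≥0∞`. -/
def supNormI (f : ℝ → ℝ) : ℝ≥0∞ := ⨆ θ : I14, (‖f (θ : ℝ)‖₊ : ℝ≥0∞)

/-- `α`-Hölder seminorm over `[-π/4, π/4]`, valued in `ℝ≥0∞`. -/
def hSemi (α : ℝ) (f : ℝ → ℝ) : ℝ≥0∞ :=
  ⨆ p : {q : I14 × I14 // (q.1 : ℝ) ≠ (q.2 : ℝ)},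
    (‖f (p.1.1 : ℝ) - f (p.1.2 : ℝ)‖₊ : ℝ≥0∞) /
      ENNReal.ofReal (|(p.1.1 : ℝ) - (p.1.2 : ℝ)| ^ α)

/-- The `C^{k,α}` norm on `[-π/4,π/4]`:
`Σ_{j ≤ k} sup |f^{(j)}| + Hölder seminorm of f^{(k)}`, valued in `ℝ≥0∞`. -/
def CkaNorm (k : ℕ) (α : ℝ) (f : ℝ → ℝ) : ℝ≥0∞ :=
  (Finset.range (k+1)).sum (fun j => supNormI (iteratedDerivWithin j f I14)) +
    hSemi α (iteratedDerivWithin k f I14)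

/-- The `C^k` norm `Σ_{j ≤ k} sup |f^{(j)}|` on `[-π/4,π/4]`, valued in `ℝ≥0∞`. -/
def CkNorm (k : ℕ) (f : ℝ → ℝ) : ℝ≥0∞ :=
  (Finset.range (k+1)).sum (fun j => supNormI (iteratedDerivWithin j f I14))


namespace OneDAux

lemma pi4_pos : (0:ℝ) < π/4 := by positivity
lemma neg_lt_pi4 : -(π/4) < (π/4) := by linarith [pi4_pos]
lemma uniqueDiffOn_I14 : UniqueDiffOn ℝ I14 := uniqueDiffOn_Icc neg_lt_pi4
lemma I14_sub : Icc (0:ℝ) (π/4) ⊆ I14 := Icc_subset_Icc (by linarith [pi4_pos]) le_rfl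
lemma zero_mem_I14 : (0:ℝ) ∈ I14 := ⟨by linarith [pi4_pos], le_of_lt pi4_pos⟩
lemma pi4_mem_I14 : (π/4) ∈ I14 := ⟨by linarith [pi4_pos], le_rfl⟩

/-- The space-time rectangle. -/
def SS (T : ℝ) : Set (ℝ × ℝ) := Icc (0:ℝ) T ×ˢ I14

variable {T : ℝ}

lemma uniqueDiffOn_SS (hT : 0 < T) : UniqueDiffOn ℝ (SS T) :=
  (uniqueDiffOn_Icc hT).prod uniqueDiffOn_I14

lemma mem_closure_interior_SS (hT : 0 < T) {q : ℝ × ℝ} (hq : q ∈ SS T) :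
    q ∈ closure (interior (SS T)) := by
  have h1 : interior (SS T) = Ioo (0:ℝ) T ×ˢ Ioo (-(π/4)) (π/4) := by
    rw [SS, interior_prod_eq, interior_Icc, I14, interior_Icc]
  have h2 : closure (Ioo (0:ℝ) T ×ˢ Ioo (-(π/4)) (π/4)) = SS T := by
    rw [closure_prod_eq, closure_Ioo hT.ne, closure_Ioo neg_lt_pi4.ne]; rfl
  rw [h1, h2]; exact hq

/-- slice in the second variable: derivative in `θ`. -/
lemma hasDerivWithinAt_slice_snd {F : ℝ × ℝ → ℝ} {q : ℝ × ℝ}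
    (hF : DifferentiableWithinAt ℝ F (SS T) q) (hq : q ∈ SS T) :
    HasDerivWithinAt (fun y => F (q.1, y))
      (fderivWithin ℝ F (SS T) q ((0:ℝ), (1:ℝ))) I14 q.2 := by
  have h1 : HasDerivWithinAt (fun y : ℝ => ((q.1, y) : ℝ × ℝ)) ((0:ℝ), (1:ℝ)) I14 q.2 :=
    ((hasDerivAt_const q.2 q.1).prodMk (hasDerivAt_id q.2)).hasDerivWithinAt
  have h2 := hF.hasFDerivWithinAt.comp_hasDerivWithinAt q.2 h1
    (fun y hy => show (q.1, y) ∈ SS T from ⟨hq.1, hy⟩)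
  exact h2

/-- slice in the first variable: derivative in `t`. -/
lemma hasDerivWithinAt_slice_fst {F : ℝ × ℝ → ℝ} {q : ℝ × ℝ}
    (hF : DifferentiableWithinAt ℝ F (SS T) q) (hq : q ∈ SS T) :
    HasDerivWithinAt (fun s => F (s, q.2))
      (fderivWithin ℝ F (SS T) q ((1:ℝ), (0:ℝ))) (Icc 0 T) q.1 := by
  have h1 : HasDerivWithinAt (fun s : ℝ => ((s, q.2) : ℝ × ℝ)) ((1:ℝ), (0:ℝ)) (Icc 0 T) q.1 :=
    ((hasDerivAt_id q.1).prodMk (hasDerivAt_const q.1 q.2)).hasDerivWithinAt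
  exact hF.hasFDerivWithinAt.comp_hasDerivWithinAt q.1 h1
    (fun s hs => show (s, q.2) ∈ SS T from ⟨hs, hq.2⟩)

lemma derivWithin_slice_snd {F : ℝ × ℝ → ℝ} {q : ℝ × ℝ}
    (hF : DifferentiableWithinAt ℝ F (SS T) q) (hq : q ∈ SS T) :
    derivWithin (fun y => F (q.1, y)) I14 q.2 = fderivWithin ℝ F (SS T) q ((0:ℝ), (1:ℝ)) :=
  (hasDerivWithinAt_slice_snd hF hq).derivWithin (uniqueDiffOn_I14 q.2 hq.2)

lemma derivWithin_slice_fst (hT : 0 < T) {F : ℝ × ℝ → ℝ} {q : ℝ × ℝ}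
    (hF : DifferentiableWithinAt ℝ F (SS T) q) (hq : q ∈ SS T) :
    derivWithin (fun s => F (s, q.2)) (Icc 0 T) q.1 = fderivWithin ℝ F (SS T) q ((1:ℝ), (0:ℝ)) :=
  (hasDerivWithinAt_slice_fst hF hq).derivWithin (uniqueDiffOn_Icc hT q.1 hq.1)

/-- directional derivative of `F` in direction `v`, as a function on the rectangle -/
def DD (T : ℝ) (v : ℝ × ℝ) (F : ℝ × ℝ → ℝ) : ℝ × ℝ → ℝ :=
  fun q => fderivWithin ℝ F (SS T) q v

lemma DD_contDiffOn (hT : 0 < T) {F : ℝ × ℝ → ℝ} {n m : ℕ} (hF : ContDiffOn ℝ n F (SS T))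
    (hmn : m + 1 ≤ n) (v : ℝ × ℝ) : ContDiffOn ℝ m (DD T v F) (SS T) :=
  (hF.fderivWithin (uniqueDiffOn_SS hT) (by exact_mod_cast Nat.cast_le.2 hmn)).clm_apply
    contDiffOn_const

/-- Symmetry of second derivatives on the rectangle. -/
lemma swap_DD (hT : 0 < T) {F : ℝ × ℝ → ℝ} (hF : ContDiffOn ℝ 2 F (SS T)) {q : ℝ × ℝ}
    (hq : q ∈ SS T) (v w : ℝ × ℝ) :
    fderivWithin ℝ (DD T v F) (SS T) q w = fderivWithin ℝ (DD T w F) (SS T) q v := by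
  have hUD := uniqueDiffOn_SS hT
  have hsym : IsSymmSndFDerivWithinAt ℝ F (SS T) q :=
    (hF q hq).isSymmSndFDerivWithinAt (by simp) hUD (mem_closure_interior_SS hT hq) hq
  have hdiff : DifferentiableWithinAt ℝ (fderivWithin ℝ F (SS T)) (SS T) q :=
    ((hF.fderivWithin (m := 1) hUD (by norm_num)).differentiableOn one_ne_zero) q hq
  have key : ∀ u : ℝ × ℝ, fderivWithin ℝ (DD T u F) (SS T) q =
      (fderivWithin ℝ (fderivWithin ℝ F (SS T)) (SS T) q).flip u := by
    intro u
    have := fderivWithin_clm_apply (𝕜 := ℝ) (hUD q hq) hdiff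
      (differentiableWithinAt_const u)
    rw [show (fun y => (fderivWithin ℝ F (SS T) y) u) = DD T u F from rfl] at this
    rw [this, fderivWithin_const_apply _, ContinuousLinearMap.comp_zero, zero_add]
  rw [key v, key w]
  exact hsym w v

end OneDAux
namespace OneDAux
variable {T : ℝ}

lemma iter2_eq {f : ℝ → ℝ} {θ : ℝ} (hθ : θ ∈ I14) :
    iteratedDerivWithin 2 f I14 θ = derivWithin (derivWithin f I14) I14 θ := by
  rw [show (2:ℕ) = 1 + 1 from rfl, iteratedDerivWithin_succ]
  exact derivWithin_congr (fun y hy => congrFun iteratedDerivWithin_one y)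
    (congrFun iteratedDerivWithin_one θ)

lemma slice_contDiffOn {n : ℕ∞} {F : ℝ × ℝ → ℝ} (hF : ContDiffOn ℝ n F (SS T)) {t : ℝ}
    (ht : t ∈ Icc 0 T) : ContDiffOn ℝ n (fun y => F (t, y)) I14 :=
  hF.comp ((contDiff_const.prodMk contDiff_id).contDiffOn) (fun y hy => ⟨ht, hy⟩)

lemma hasDeriv_derivWithin_of_C2 {f : ℝ → ℝ} (hf : ContDiffOn ℝ 2 f I14) {θ : ℝ}
    (hθ : θ ∈ I14) :
    HasDerivWithinAt (derivWithin f I14) (iteratedDerivWithin 2 f I14 θ) I14 θ := by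
  have h := (((hf.derivWithin uniqueDiffOn_I14 (m := 1) (by norm_num)).differentiableOn
    one_ne_zero) θ hθ).hasDerivWithinAt
  rwa [iter2_eq hθ]

lemma hasDeriv_iter2_of_C3 {f : ℝ → ℝ} (hf : ContDiffOn ℝ 3 f I14) {θ : ℝ} (hθ : θ ∈ I14) :
    HasDerivWithinAt (iteratedDerivWithin 2 f I14) (iteratedDerivWithin 3 f I14 θ) I14 θ := by
  have hd2 : DifferentiableWithinAt ℝ (derivWithin (derivWithin f I14) I14) I14 θ :=
    (((hf.derivWithin uniqueDiffOn_I14 (m := 2) (by norm_num)).derivWithin uniqueDiffOn_I14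
      (m := 1) (by norm_num)).differentiableOn one_ne_zero) θ hθ
  have hd : DifferentiableWithinAt ℝ (iteratedDerivWithin 2 f I14) I14 θ :=
    hd2.congr (fun y hy => iter2_eq hy) (iter2_eq hθ)
  have h := hd.hasDerivWithinAt
  rwa [show (3:ℕ) = 2 + 1 from rfl, iteratedDerivWithin_succ (n := 2)]

/-- Time derivative of the spatial slice-derivative, with mixed partials swapped. -/
lemma time_deriv_of_spatial (hT : 0 < T) {F : ℝ × ℝ → ℝ} (hF : ContDiffOn ℝ 2 F (SS T))
    {t θ : ℝ} (ht : t ∈ Icc 0 T) (hθ : θ ∈ I14) :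
    HasDerivWithinAt (fun s => derivWithin (fun y => F (s, y)) I14 θ)
      (derivWithin (fun y => derivWithin (fun s' => F (s', y)) (Icc 0 T) t) I14 θ)
      (Icc 0 T) t := by
  have hq : ((t, θ) : ℝ × ℝ) ∈ SS T := ⟨ht, hθ⟩
  have hA : ContDiffOn ℝ 1 (DD T (0,1) F) (SS T) := DD_contDiffOn hT hF (by norm_num) _
  have hB : ContDiffOn ℝ 1 (DD T (1,0) F) (SS T) := DD_contDiffOn hT hF (by norm_num) _
  have hFd : DifferentiableOn ℝ F (SS T) := hF.differentiableOn (by norm_num)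
  have h1 : HasDerivWithinAt (fun s => DD T (0,1) F (s, θ))
      (fderivWithin ℝ (DD T (0,1) F) (SS T) (t, θ) (1,0)) (Icc 0 T) t :=
    hasDerivWithinAt_slice_fst (hA.differentiableOn one_ne_zero (t, θ) hq) hq
  have h2 : HasDerivWithinAt (fun s => derivWithin (fun y => F (s, y)) I14 θ)
      (fderivWithin ℝ (DD T (0,1) F) (SS T) (t, θ) (1,0)) (Icc 0 T) t := by
    refine h1.congr (fun s hs => ?_) ?_
    · exact derivWithin_slice_snd (hFd (s, θ) ⟨hs, hθ⟩) ⟨hs, hθ⟩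
    · exact derivWithin_slice_snd (hFd (t, θ) hq) hq
  have hv : fderivWithin ℝ (DD T (0,1) F) (SS T) (t, θ) (1,0)
      = derivWithin (fun y => derivWithin (fun s' => F (s', y)) (Icc 0 T) t) I14 θ := by
    rw [swap_DD hT hF hq (0,1) (1,0)]
    rw [← derivWithin_slice_snd (hB.differentiableOn one_ne_zero (t, θ) hq) hq]
    exact derivWithin_congr
      (fun y hy => (derivWithin_slice_fst hT (hFd (t, y) ⟨ht, hy⟩) ⟨ht, hy⟩).symm)
      (derivWithin_slice_fst hT (hFd (t, θ) hq) hq).symm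
  rwa [hv] at h2

end OneDAux
namespace OneDAux
variable {T : ℝ} {g P G : ℝ → ℝ → ℝ}

lemma evolution_g (hsol : OneDSol (Icc 0 T) g P G) {t θ : ℝ}
    (ht : t ∈ Icc 0 T) (hθ : θ ∈ I14) :
    HasDerivWithinAt (fun s => g s θ)
      (Real.sin θ * P t θ + Real.cos θ * derivWithin (P t) I14 θ
        - 2 * G t θ * derivWithin (g t) I14 θ) (Icc 0 T) t := by
  have h := (hsol.reg_gt θ hθ t ht).hasDerivWithinAt
  have e := hsol.eq_g t ht θ hθ
  exact h.congr_deriv (by linarith)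

lemma evolution_P' (hsol : OneDSol (Icc 0 T) g P G) {t θ : ℝ}
    (ht : t ∈ Icc 0 T) (hθ : θ ∈ I14) :
    HasDerivWithinAt (fun s => P s θ)
      (P t θ * derivWithin (G t) I14 θ - 2 * G t θ * derivWithin (P t) I14 θ) (Icc 0 T) t := by
  have h := (hsol.reg_Pt θ hθ t ht).hasDerivWithinAt
  have e := hsol.eq_P t ht θ hθ
  exact h.congr_deriv (by linarith)

lemma evolution_gθ (hT : 0 < T) (hsol : OneDSol (Icc 0 T) g P G)
    (hgC3 : ContDiffOn ℝ 3 (fun q : ℝ × ℝ => g q.1 q.2) (SS T))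
    (hPC3 : ContDiffOn ℝ 3 (fun q : ℝ × ℝ => P q.1 q.2) (SS T))
    {t θ : ℝ} (ht : t ∈ Icc 0 T) (hθ : θ ∈ I14) :
    HasDerivWithinAt (fun s => derivWithin (g s) I14 θ)
      (Real.cos θ * (P t θ + iteratedDerivWithin 2 (P t) I14 θ)
        - 2 * derivWithin (G t) I14 θ * derivWithin (g t) I14 θ
        - 2 * G t θ * iteratedDerivWithin 2 (g t) I14 θ) (Icc 0 T) t := by
  have hgt3 : ContDiffOn ℝ 3 (g t) I14 := slice_contDiffOn hgC3 ht
  have hPt3 : ContDiffOn ℝ 3 (P t) I14 := slice_contDiffOn hPC3 ht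
  have H := time_deriv_of_spatial hT (hgC3.of_le (by norm_num)) ht hθ
  have hval : derivWithin (fun y => derivWithin (fun s' => g s' y) (Icc 0 T) t) I14 θ
      = derivWithin (fun y => Real.sin y * P t y + Real.cos y * derivWithin (P t) I14 y
          - 2 * G t y * derivWithin (g t) I14 y) I14 θ :=
    derivWithin_congr (fun y hy => by have := hsol.eq_g t ht y hy; linarith)
      (by have := hsol.eq_g t ht θ hθ; linarith)
  have hsin := (Real.hasDerivAt_sin θ).hasDerivWithinAt (s := I14)
  have hcos := (Real.hasDerivAt_cos θ).hasDerivWithinAt (s := I14)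
  have hP := (hsol.reg_P t ht θ hθ).hasDerivWithinAt
  have hPθ := hasDeriv_derivWithin_of_C2 (hPt3.of_le (by norm_num)) hθ
  have hG := ((hsol.G_C2 t ht).differentiableOn two_ne_zero θ hθ).hasDerivWithinAt
  have hgθ := hasDeriv_derivWithin_of_C2 (hgt3.of_le (by norm_num)) hθ
  have hR := ((hsin.mul hP).add (hcos.mul hPθ)).sub ((hG.const_mul 2).mul hgθ)
  have hR2 := hR.derivWithin (uniqueDiffOn_I14 θ hθ)
  simp only [Pi.mul_def, Pi.add_def, Pi.sub_def] at hR2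
  rw [hval, hR2] at H
  exact H.congr_deriv (by ring)

lemma evolution_Pθ (hT : 0 < T) (hsol : OneDSol (Icc 0 T) g P G)
    (hPC3 : ContDiffOn ℝ 3 (fun q : ℝ × ℝ => P q.1 q.2) (SS T))
    {t θ : ℝ} (ht : t ∈ Icc 0 T) (hθ : θ ∈ I14) :
    HasDerivWithinAt (fun s => derivWithin (P s) I14 θ)
      (P t θ * (g t θ - 4 * G t θ)
        - derivWithin (G t) I14 θ * derivWithin (P t) I14 θ
        - 2 * G t θ * iteratedDerivWithin 2 (P t) I14 θ) (Icc 0 T) t := by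
  have hPt3 : ContDiffOn ℝ 3 (P t) I14 := slice_contDiffOn hPC3 ht
  have H := time_deriv_of_spatial hT (hPC3.of_le (by norm_num)) ht hθ
  have hval : derivWithin (fun y => derivWithin (fun s' => P s' y) (Icc 0 T) t) I14 θ
      = derivWithin (fun y => P t y * derivWithin (G t) I14 y
          - 2 * G t y * derivWithin (P t) I14 y) I14 θ :=
    derivWithin_congr (fun y hy => by have := hsol.eq_P t ht y hy; linarith)
      (by have := hsol.eq_P t ht θ hθ; linarith)
  have hP := (hsol.reg_P t ht θ hθ).hasDerivWithinAt
  have hPθ := hasDeriv_derivWithin_of_C2 (hPt3.of_le (by norm_num)) hθ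
  have hG := ((hsol.G_C2 t ht).differentiableOn two_ne_zero θ hθ).hasDerivWithinAt
  have hGθ := hasDeriv_derivWithin_of_C2 (hsol.G_C2 t ht) hθ
  have hR' := (hP.mul hGθ).sub ((hG.const_mul 2).mul hPθ)
  have hGeq : iteratedDerivWithin 2 (G t) I14 θ = g t θ - 4 * G t θ := by
    have := hsol.G_eq t ht θ hθ; linarith
  have hR2 := hR'.derivWithin (uniqueDiffOn_I14 θ hθ)
  simp only [Pi.mul_def, Pi.add_def, Pi.sub_def] at hR2
  rw [hval, hR2] at H
  rw [hGeq] at H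
  exact H.congr_deriv (by ring)

lemma evolution_Pθθ (hT : 0 < T) (hsol : OneDSol (Icc 0 T) g P G)
    (hgC3 : ContDiffOn ℝ 3 (fun q : ℝ × ℝ => g q.1 q.2) (SS T))
    (hPC3 : ContDiffOn ℝ 3 (fun q : ℝ × ℝ => P q.1 q.2) (SS T))
    {t θ : ℝ} (ht : t ∈ Icc 0 T) (hθ : θ ∈ I14) :
    HasDerivWithinAt (fun s => iteratedDerivWithin 2 (P s) I14 θ)
      (P t θ * derivWithin (g t) I14 θ - 4 * P t θ * derivWithin (G t) I14 θ
        - 3 * derivWithin (G t) I14 θ * iteratedDerivWithin 2 (P t) I14 θ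
        - 2 * G t θ * iteratedDerivWithin 3 (P t) I14 θ) (Icc 0 T) t := by
  have hPt3 : ContDiffOn ℝ 3 (P t) I14 := slice_contDiffOn hPC3 ht
  set Fp : ℝ × ℝ → ℝ := fun q => P q.1 q.2 with hFp
  have hF2 : ContDiffOn ℝ 2 (DD T (0,1) Fp) (SS T) := DD_contDiffOn hT hPC3 (by norm_num) _
  have hFpd : DifferentiableOn ℝ Fp (SS T) := hPC3.differentiableOn (by norm_num)
  -- identification of DD (0,1) Fp slices with spatial derivatives of P
  have hid : ∀ s ∈ Icc (0:ℝ) T, ∀ y ∈ I14, DD T (0,1) Fp (s, y) = derivWithin (P s) I14 y := by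
    intro s hs y hy
    exact (derivWithin_slice_snd (hFpd (s, y) ⟨hs, hy⟩) ⟨hs, hy⟩).symm
  have H := time_deriv_of_spatial hT hF2 ht hθ
  -- replace the differentiated function by iteratedDerivWithin 2 (P s)
  have H2 : HasDerivWithinAt (fun s => iteratedDerivWithin 2 (P s) I14 θ)
      (derivWithin (fun y => derivWithin (fun s' => DD T (0,1) Fp (s', y)) (Icc 0 T) t) I14 θ)
      (Icc 0 T) t := by
    refine H.congr (fun s hs => ?_) ?_
    · rw [iter2_eq hθ]
      exact (derivWithin_congr (fun y hy => hid s hs y hy) (hid s hs θ hθ)).symm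
    · rw [iter2_eq hθ]
      exact (derivWithin_congr (fun y hy => hid t ht y hy) (hid t ht θ hθ)).symm
  -- compute the value
  have hval1 : derivWithin (fun y => derivWithin (fun s' => DD T (0,1) Fp (s', y)) (Icc 0 T) t)
        I14 θ
      = derivWithin (fun y => P t y * (g t y - 4 * G t y)
          - derivWithin (G t) I14 y * derivWithin (P t) I14 y
          - 2 * G t y * iteratedDerivWithin 2 (P t) I14 y) I14 θ := by
    refine derivWithin_congr (fun y hy => ?_) ?_
    · have e1 : derivWithin (fun s' => DD T (0,1) Fp (s', y)) (Icc 0 T) t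
          = derivWithin (fun s' => derivWithin (P s') I14 y) (Icc 0 T) t :=
        derivWithin_congr (fun s hs => hid s hs y hy) (hid t ht y hy)
      rw [e1, (evolution_Pθ hT hsol hPC3 ht hy).derivWithin (uniqueDiffOn_Icc hT t ht)]
    · have e1 : derivWithin (fun s' => DD T (0,1) Fp (s', θ)) (Icc 0 T) t
          = derivWithin (fun s' => derivWithin (P s') I14 θ) (Icc 0 T) t :=
        derivWithin_congr (fun s hs => hid s hs θ hθ) (hid t ht θ hθ)
      rw [e1, (evolution_Pθ hT hsol hPC3 ht hθ).derivWithin (uniqueDiffOn_Icc hT t ht)]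
  have hP := (hsol.reg_P t ht θ hθ).hasDerivWithinAt
  have hg' := (hsol.reg_g t ht θ hθ).hasDerivWithinAt
  have hG := ((hsol.G_C2 t ht).differentiableOn two_ne_zero θ hθ).hasDerivWithinAt
  have hGθ := hasDeriv_derivWithin_of_C2 (hsol.G_C2 t ht) hθ
  have hPθ := hasDeriv_derivWithin_of_C2 (hPt3.of_le (by norm_num)) hθ
  have hPθθ := hasDeriv_iter2_of_C3 hPt3 hθ
  have hGeq : iteratedDerivWithin 2 (G t) I14 θ = g t θ - 4 * G t θ := by
    have := hsol.G_eq t ht θ hθ; linarith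
  have hR := ((hP.mul (hg'.sub (hG.const_mul 4))).sub (hGθ.mul hPθ)).sub
    ((hG.const_mul 2).mul hPθθ)
  have hR2 := hR.derivWithin (uniqueDiffOn_I14 θ hθ)
  simp only [Pi.mul_def, Pi.add_def, Pi.sub_def] at hR2
  rw [hval1, hR2, hGeq] at H2
  exact H2.congr_deriv (by ring)

lemma evolution_W (hT : 0 < T) (hsol : OneDSol (Icc 0 T) g P G)
    (hgC3 : ContDiffOn ℝ 3 (fun q : ℝ × ℝ => g q.1 q.2) (SS T))
    (hPC3 : ContDiffOn ℝ 3 (fun q : ℝ × ℝ => P q.1 q.2) (SS T))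
    {t θ : ℝ} (ht : t ∈ Icc 0 T) (hθ : θ ∈ I14) :
    HasDerivWithinAt (fun s => P s θ + iteratedDerivWithin 2 (P s) I14 θ)
      (P t θ * derivWithin (g t) I14 θ
        - 3 * derivWithin (G t) I14 θ * (P t θ + iteratedDerivWithin 2 (P t) I14 θ)
        - 2 * G t θ * (derivWithin (P t) I14 θ + iteratedDerivWithin 3 (P t) I14 θ))
      (Icc 0 T) t := by
  have h := (evolution_P' hsol ht hθ).add (evolution_Pθθ hT hsol hgC3 hPC3 ht hθ)
  exact h.congr_deriv (by ring)

/-- spatial derivative of `W = P + P_θθ`. -/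
lemma spatial_deriv_W (hsol : OneDSol (Icc 0 T) g P G)
    (hPC3 : ContDiffOn ℝ 3 (fun q : ℝ × ℝ => P q.1 q.2) (SS T))
    {t θ : ℝ} (ht : t ∈ Icc 0 T) (hθ : θ ∈ I14) :
    derivWithin (fun y => P t y + iteratedDerivWithin 2 (P t) I14 y) I14 θ
      = derivWithin (P t) I14 θ + iteratedDerivWithin 3 (P t) I14 θ := by
  have hPt3 : ContDiffOn ℝ 3 (P t) I14 := slice_contDiffOn hPC3 ht
  exact ((hsol.reg_P t ht θ hθ).hasDerivWithinAt.add
    (hasDeriv_iter2_of_C3 hPt3 hθ)).derivWithin (uniqueDiffOn_I14 θ hθ)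

end OneDAux
namespace OneDAux

/-- `φ = G' sin 2θ - 2 G cos 2θ`, satisfying `φ' = (G''+4G) sin 2θ`. -/
def phiG (f : ℝ → ℝ) : ℝ → ℝ :=
  fun θ => derivWithin f I14 θ * Real.sin (2*θ) - 2 * f θ * Real.cos (2*θ)

/-- `ψ = G' cos 2θ + 2 G sin 2θ`, satisfying `ψ' = (G''+4G) cos 2θ`. -/
def psiG (f : ℝ → ℝ) : ℝ → ℝ :=
  fun θ => derivWithin f I14 θ * Real.cos (2*θ) + 2 * f θ * Real.sin (2*θ)

variable {f gg : ℝ → ℝ}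

lemma hasDerivAt_sin2 (θ : ℝ) : HasDerivAt (fun y : ℝ => Real.sin (2*y))
    (Real.cos (2*θ) * 2) θ := by
  have h2 : HasDerivAt (fun y : ℝ => 2*y) 2 θ := by
    simpa using (hasDerivAt_id θ).const_mul (2:ℝ)
  simpa [Function.comp_def] using (Real.hasDerivAt_sin (2*θ)).comp θ h2

lemma hasDerivAt_cos2 (θ : ℝ) : HasDerivAt (fun y : ℝ => Real.cos (2*y))
    (-Real.sin (2*θ) * 2) θ := by
  have h2 : HasDerivAt (fun y : ℝ => 2*y) 2 θ := by
    simpa using (hasDerivAt_id θ).const_mul (2:ℝ)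
  simpa [Function.comp_def] using (Real.hasDerivAt_cos (2*θ)).comp θ h2

lemma phi_hasDeriv (hC2 : ContDiffOn ℝ 2 f I14)
    (heq : ∀ θ ∈ I14, iteratedDerivWithin 2 f I14 θ + 4 * f θ = gg θ)
    {θ : ℝ} (hθ : θ ∈ I14) :
    HasDerivWithinAt (phiG f) (gg θ * Real.sin (2*θ)) I14 θ := by
  have hfd := (hC2.differentiableOn two_ne_zero θ hθ).hasDerivWithinAt
  have hfθ := hasDeriv_derivWithin_of_C2 hC2 hθ
  have h := (hfθ.mul (hasDerivAt_sin2 θ).hasDerivWithinAt).sub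
    ((hfd.const_mul 2).mul (hasDerivAt_cos2 θ).hasDerivWithinAt)
  have e := heq θ hθ
  refine h.congr_deriv ?_
  have : gg θ = iteratedDerivWithin 2 f I14 θ + 4 * f θ := e.symm
  rw [this]; ring

lemma psi_hasDeriv (hC2 : ContDiffOn ℝ 2 f I14)
    (heq : ∀ θ ∈ I14, iteratedDerivWithin 2 f I14 θ + 4 * f θ = gg θ)
    {θ : ℝ} (hθ : θ ∈ I14) :
    HasDerivWithinAt (psiG f) (gg θ * Real.cos (2*θ)) I14 θ := by
  have hfd := (hC2.differentiableOn two_ne_zero θ hθ).hasDerivWithinAt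
  have hfθ := hasDeriv_derivWithin_of_C2 hC2 hθ
  have h := (hfθ.mul (hasDerivAt_cos2 θ).hasDerivWithinAt).add
    ((hfd.const_mul 2).mul (hasDerivAt_sin2 θ).hasDerivWithinAt)
  have e := heq θ hθ
  refine h.congr_deriv ?_
  have : gg θ = iteratedDerivWithin 2 f I14 θ + 4 * f θ := e.symm
  rw [this]; ring

lemma phi_at_zero (h0 : f 0 = 0) : phiG f 0 = 0 := by
  simp [phiG, h0]

lemma psi_at_pi4 (hbc : f (π/4) = 0) : psiG f (π/4) = 0 := by
  have h2 : 2 * (π/4) = π/2 := by ring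
  simp [psiG, hbc, h2, Real.cos_pi_div_two]

lemma recover_2G (θ : ℝ) :
    2 * f θ = psiG f θ * Real.sin (2*θ) - phiG f θ * Real.cos (2*θ) := by
  have pyth := Real.sin_sq_add_cos_sq (2*θ)
  simp only [phiG, psiG]
  linear_combination (-(2 * f θ)) * pyth

lemma recover_Gθ (θ : ℝ) :
    derivWithin f I14 θ = phiG f θ * Real.sin (2*θ) + psiG f θ * Real.cos (2*θ) := by
  have pyth := Real.sin_sq_add_cos_sq (2*θ)
  simp only [phiG, psiG]
  linear_combination (-(derivWithin f I14 θ)) * pyth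

lemma abs_mul_le_of_abs_le_one {x y A : ℝ} (hx : |x| ≤ A) (hy : |y| ≤ 1) : |x * y| ≤ A := by
  rw [abs_mul]
  calc |x| * |y| ≤ A * 1 := mul_le_mul hx hy (abs_nonneg _) ((abs_nonneg x).trans hx)
  _ = A := mul_one A

/-- Uniform bound for `G` and `G'` in terms of a sup bound for `g`. -/
lemma G_uniform_bound (hC2 : ContDiffOn ℝ 2 f I14)
    (heq : ∀ θ ∈ I14, iteratedDerivWithin 2 f I14 θ + 4 * f θ = gg θ)
    (hbc : f (π/4) = 0) (h0 : f 0 = 0) {Mg : ℝ}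
    (hMg : ∀ θ ∈ I14, |gg θ| ≤ Mg) :
    ∀ θ ∈ I14, |f θ| ≤ π * Mg ∧ |derivWithin f I14 θ| ≤ π * Mg := by
  have hMg0 : 0 ≤ Mg := (abs_nonneg _).trans (hMg 0 zero_mem_I14)
  have hder : ∀ x ∈ I14, ‖gg x * Real.sin (2*x)‖ ≤ Mg := fun x hx =>
    abs_mul_le_of_abs_le_one (hMg x hx) (abs_sin_le_one _)
  have hder' : ∀ x ∈ I14, ‖gg x * Real.cos (2*x)‖ ≤ Mg := fun x hx =>
    abs_mul_le_of_abs_le_one (hMg x hx) (abs_cos_le_one _)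
  have hφbound : ∀ θ ∈ I14, |phiG f θ| ≤ Mg * (π/4) := by
    intro θ hθ
    have := Convex.norm_image_sub_le_of_norm_hasDerivWithin_le
      (f' := fun x => gg x * Real.sin (2*x))
      (fun x hx => phi_hasDeriv hC2 heq hx) hder (convex_Icc _ _) zero_mem_I14 hθ
    rw [phi_at_zero h0, sub_zero] at this
    calc |phiG f θ| ≤ Mg * ‖θ - 0‖ := this
    _ ≤ Mg * (π/4) := by
        apply mul_le_mul_of_nonneg_left _ hMg0
        rw [sub_zero, Real.norm_eq_abs, abs_le]
        exact ⟨by linarith [hθ.1], hθ.2⟩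
  have hψbound : ∀ θ ∈ I14, |psiG f θ| ≤ Mg * (π/2) := by
    intro θ hθ
    have := Convex.norm_image_sub_le_of_norm_hasDerivWithin_le
      (f' := fun x => gg x * Real.cos (2*x))
      (fun x hx => psi_hasDeriv hC2 heq hx) hder' (convex_Icc _ _) pi4_mem_I14 hθ
    rw [psi_at_pi4 hbc, sub_zero] at this
    calc |psiG f θ| ≤ Mg * ‖θ - π/4‖ := this
    _ ≤ Mg * (π/2) := by
        apply mul_le_mul_of_nonneg_left _ hMg0
        rw [Real.norm_eq_abs, abs_le]
        constructor <;> [linarith [hθ.1]; linarith [hθ.2, pi4_pos]]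
  intro θ hθ
  have h2G := recover_2G (f := f) θ
  have hGθ := recover_Gθ (f := f) θ
  have b1 : |psiG f θ * Real.sin (2*θ)| ≤ Mg * (π/2) :=
    abs_mul_le_of_abs_le_one (hψbound θ hθ) (abs_sin_le_one _)
  have b2 : |phiG f θ * Real.cos (2*θ)| ≤ Mg * (π/4) :=
    abs_mul_le_of_abs_le_one (hφbound θ hθ) (abs_cos_le_one _)
  have b3 : |phiG f θ * Real.sin (2*θ)| ≤ Mg * (π/4) :=
    abs_mul_le_of_abs_le_one (hφbound θ hθ) (abs_sin_le_one _)
  have b4 : |psiG f θ * Real.cos (2*θ)| ≤ Mg * (π/2) :=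
    abs_mul_le_of_abs_le_one (hψbound θ hθ) (abs_cos_le_one _)
  have hpi : 0 < π := pi_pos
  constructor
  · have habs : |2 * f θ| ≤ Mg * (π/2) + Mg * (π/4) := by
      rw [h2G]
      exact (abs_sub _ _).trans (add_le_add b1 b2)
    rw [abs_mul, abs_two] at habs
    nlinarith [abs_nonneg (f θ)]
  · rw [hGθ]
    refine le_trans (abs_add_le _ _) ?_
    nlinarith [add_le_add b3 b4]

end OneDAux
namespace OneDAux
variable {f gg : ℝ → ℝ}

lemma contOn_phi (hC2 : ContDiffOn ℝ 2 f I14) : ContinuousOn (phiG f) I14 := by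
  have h1 : ContinuousOn (derivWithin f I14) I14 :=
    (hC2.derivWithin uniqueDiffOn_I14 (m := 1) (by norm_num)).continuousOn
  exact (h1.mul ((Real.continuous_sin.comp (continuous_const.mul continuous_id)).continuousOn)).sub
    ((continuousOn_const.mul hC2.continuousOn).mul
      ((Real.continuous_cos.comp (continuous_const.mul continuous_id)).continuousOn))

lemma contOn_psi (hC2 : ContDiffOn ℝ 2 f I14) : ContinuousOn (psiG f) I14 := by
  have h1 : ContinuousOn (derivWithin f I14) I14 :=
    (hC2.derivWithin uniqueDiffOn_I14 (m := 1) (by norm_num)).continuousOn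
  exact (h1.mul ((Real.continuous_cos.comp (continuous_const.mul continuous_id)).continuousOn)).add
    ((continuousOn_const.mul hC2.continuousOn).mul
      ((Real.continuous_sin.comp (continuous_const.mul continuous_id)).continuousOn))

/-- The sign estimate: if `g ≥ -δ` on `[0, π/4]` then `G ≤ πδ` there. -/
lemma G_sign (hC2 : ContDiffOn ℝ 2 f I14)
    (heq : ∀ θ ∈ I14, iteratedDerivWithin 2 f I14 θ + 4 * f θ = gg θ)
    (hbc : f (π/4) = 0) (h0 : f 0 = 0) {δ : ℝ} (hδ : 0 ≤ δ)
    (hlow : ∀ θ ∈ Icc (0:ℝ) (π/4), -δ ≤ gg θ) :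
    ∀ θ ∈ Icc (0:ℝ) (π/4), f θ ≤ π * δ := by
  have hpi := pi_pos
  have hintD : interior (Icc (0:ℝ) (π/4)) ⊆ I14 := by
    rw [interior_Icc]
    exact fun x hx => I14_sub ⟨le_of_lt hx.1, le_of_lt hx.2⟩
  have hzD : (0:ℝ) ∈ Icc (0:ℝ) (π/4) := ⟨le_rfl, le_of_lt pi4_pos⟩
  have hp4D : (π/4) ∈ Icc (0:ℝ) (π/4) := ⟨le_of_lt pi4_pos, le_rfl⟩
  -- φ + δθ is monotone on [0,π/4]
  have hφmono : MonotoneOn (fun θ => phiG f θ + δ * θ) (Icc (0:ℝ) (π/4)) := by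
    refine monotoneOn_of_hasDerivWithinAt_nonneg (convex_Icc _ _)
      (((contOn_phi hC2).mono I14_sub).add (continuous_const.mul continuous_id).continuousOn)
      (f' := fun x => gg x * Real.sin (2*x) + δ) (fun x hx => ?_) (fun x hx => ?_)
    · exact ((phi_hasDeriv hC2 heq (hintD hx)).mono hintD).add
        (by simpa using ((hasDerivAt_id x).const_mul δ).hasDerivWithinAt)
    · rw [interior_Icc] at hx
      have hs0 : 0 ≤ Real.sin (2*x) :=
        Real.sin_nonneg_of_nonneg_of_le_pi (by linarith [hx.1]) (by linarith [hx.2])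
      have hs1 : Real.sin (2*x) ≤ 1 := Real.sin_le_one _
      have hg := hlow x ⟨le_of_lt hx.1, le_of_lt hx.2⟩
      show 0 ≤ gg x * Real.sin (2*x) + δ
      nlinarith [mul_nonneg (by linarith : (0:ℝ) ≤ gg x + δ) hs0,
        mul_nonneg hδ (by linarith : (0:ℝ) ≤ 1 - Real.sin (2*x))]
  -- ψ + δθ is monotone on [0,π/4]
  have hψmono : MonotoneOn (fun θ => psiG f θ + δ * θ) (Icc (0:ℝ) (π/4)) := by
    refine monotoneOn_of_hasDerivWithinAt_nonneg (convex_Icc _ _)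
      (((contOn_psi hC2).mono I14_sub).add (continuous_const.mul continuous_id).continuousOn)
      (f' := fun x => gg x * Real.cos (2*x) + δ) (fun x hx => ?_) (fun x hx => ?_)
    · exact ((psi_hasDeriv hC2 heq (hintD hx)).mono hintD).add
        (by simpa using ((hasDerivAt_id x).const_mul δ).hasDerivWithinAt)
    · rw [interior_Icc] at hx
      have hs0 : 0 ≤ Real.cos (2*x) :=
        Real.cos_nonneg_of_mem_Icc ⟨by linarith [hx.1], by linarith [hx.2]⟩
      have hs1 : Real.cos (2*x) ≤ 1 := Real.cos_le_one _
      have hg := hlow x ⟨le_of_lt hx.1, le_of_lt hx.2⟩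
      show 0 ≤ gg x * Real.cos (2*x) + δ
      nlinarith [mul_nonneg (by linarith : (0:ℝ) ≤ gg x + δ) hs0,
        mul_nonneg hδ (by linarith : (0:ℝ) ≤ 1 - Real.cos (2*x))]
  intro θ hθ
  have hφlb : -(δ * (π/4)) ≤ phiG f θ := by
    have := hφmono hzD hθ hθ.1
    simp only [phi_at_zero h0, mul_zero, add_zero, zero_add] at this
    nlinarith [hθ.1, hθ.2, hδ]
  have hψub : psiG f θ ≤ δ * (π/4) := by
    have := hψmono hθ hp4D hθ.2
    simp only [psi_at_pi4 hbc, zero_add] at this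
    nlinarith [hθ.1, hδ]
  have h2G := recover_2G (f := f) θ
  have hs0 : 0 ≤ Real.sin (2*θ) :=
    Real.sin_nonneg_of_nonneg_of_le_pi (by linarith [hθ.1]) (by linarith [hθ.2])
  have hs1 : Real.sin (2*θ) ≤ 1 := Real.sin_le_one _
  have hc0 : 0 ≤ Real.cos (2*θ) :=
    Real.cos_nonneg_of_mem_Icc ⟨by linarith [hθ.1], by linarith [hθ.2]⟩
  have hc1 : Real.cos (2*θ) ≤ 1 := Real.cos_le_one _
  have hδπ : 0 ≤ δ * (π/4) := by positivity
  have h1 : psiG f θ * Real.sin (2*θ) ≤ δ * (π/4) := by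
    nlinarith [mul_nonneg (by linarith : (0:ℝ) ≤ δ * (π/4) - psiG f θ) hs0,
      mul_nonneg hδπ (by linarith : (0:ℝ) ≤ 1 - Real.sin (2*θ))]
  have h2 : -(phiG f θ * Real.cos (2*θ)) ≤ δ * (π/4) := by
    nlinarith [mul_nonneg (by linarith : (0:ℝ) ≤ phiG f θ + δ * (π/4)) hc0,
      mul_nonneg hδπ (by linarith : (0:ℝ) ≤ 1 - Real.cos (2*θ))]
  nlinarith [h2G]

end OneDAux
namespace OneDAux

/-- At a first zero from above (interior or right endpoint in time), the one-sided
derivative is nonpositive. -/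
lemma deriv_nonpos_first_zero {ρ : ℝ → ℝ} {L t0 T : ℝ} (h0 : 0 < t0) (ht0 : t0 ∈ Icc 0 T)
    (hd : HasDerivWithinAt ρ L (Icc 0 T) t0)
    (hnn : ∀ t ∈ Icc 0 t0, 0 ≤ ρ t) (hz : ρ t0 = 0) : L ≤ 0 := by
  have hd' : HasDerivWithinAt ρ L (Icc 0 t0) t0 :=
    hd.mono (Icc_subset_Icc le_rfl ht0.2)
  rw [hasDerivWithinAt_iff_tendsto_slope] at hd'
  have hIcc : Icc (0:ℝ) t0 \ {t0} = Ico (0:ℝ) t0 := Icc_sdiff_right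
  rw [hIcc] at hd'
  have hne : (𝓝[Ico (0:ℝ) t0] t0).NeBot :=
    mem_closure_iff_nhdsWithin_neBot.1
      (by rw [closure_Ico h0.ne]; exact ⟨le_of_lt h0, le_rfl⟩)
  refine le_of_tendsto hd' ?_
  filter_upwards [self_mem_nhdsWithin] with s hs
  have hs1 : s < t0 := hs.2
  have hρs : 0 ≤ ρ s := hnn s ⟨hs.1, le_of_lt hs1⟩
  rw [slope_def_field]
  rw [hz, sub_zero]
  apply div_nonpos_of_nonneg_of_nonpos <;> linarith

/-- The transport term `2 G ∂_θ u` vanishes at a spatial minimum over `[0, π/4]`,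
since `G` vanishes at both endpoints. -/
lemma transport_zero {GG : ℝ → ℝ} (hG0 : GG 0 = 0) (hGp4 : GG (π/4) = 0) {u : ℝ → ℝ}
    {θ0 : ℝ} (hθ0 : θ0 ∈ Icc (0:ℝ) (π/4))
    (hmin : ∀ y ∈ Icc (0:ℝ) (π/4), u θ0 ≤ u y) :
    2 * GG θ0 * derivWithin u I14 θ0 = 0 := by
  rcases eq_or_lt_of_le hθ0.1 with h1 | h1
  · rw [← h1, hG0]; ring
  rcases eq_or_lt_of_le hθ0.2 with h2 | h2
  · rw [h2, hGp4]; ring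
  · have hmem : Icc (0:ℝ) (π/4) ∈ 𝓝 θ0 := Icc_mem_nhds h1 h2
    have hloc : IsLocalMin u θ0 := Filter.eventually_of_mem hmem (fun y hy => hmin y hy)
    have hI : I14 ∈ 𝓝 θ0 := Icc_mem_nhds (by linarith [pi4_pos]) h2
    rw [derivWithin_of_mem_nhds hI, hloc.deriv_eq_zero]
    ring

lemma prod_lb1 {s x δ : ℝ} (hs0 : 0 ≤ s) (hs1 : s ≤ 1) (hx : -δ ≤ x) (hδ : 0 ≤ δ) :
    -δ ≤ s * x := by nlinarith

lemma corner_bound {c x a b d e : ℝ} (hc1 : -a ≤ c) (hc2 : c ≤ b) (hx1 : -d ≤ x)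
    (hx2 : x ≤ e) (ha : 0 ≤ a) (hb : 0 ≤ b) (hd : 0 ≤ d) (he : 0 ≤ e) :
    -(a * e + b * d) ≤ c * x := by
  rcases le_or_gt 0 c with hc | hc
  · have h1 : (-d) * c ≤ x * c := mul_le_mul_of_nonneg_right hx1 hc
    have h2 : c * d ≤ b * d := mul_le_mul_of_nonneg_right hc2 hd
    have h3 : 0 ≤ a * e := mul_nonneg ha he
    nlinarith
  · have h1 : c * e ≤ c * x := by nlinarith
    have h2 : (-a) * e ≤ c * e := mul_le_mul_of_nonneg_right hc1 he
    have h3 : 0 ≤ b * d := mul_nonneg hb hd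
    nlinarith

lemma exp_hasDeriv {K ε t0 T : ℝ} :
    HasDerivWithinAt (fun s => ε * Real.exp (K * s)) (ε * (Real.exp (K * t0) * K))
      (Icc 0 T) t0 := by
  have h2 : HasDerivAt (fun s : ℝ => K * s) K t0 := by
    simpa using (hasDerivAt_id t0).const_mul K
  have := ((Real.hasDerivAt_exp (K * t0)).comp t0 h2).const_mul ε
  exact (by simpa [Function.comp_def] using this : HasDerivAt _ _ t0).hasDerivWithinAt

end OneDAux
namespace OneDAux
variable {T : ℝ} {g P : ℝ → ℝ → ℝ}

lemma contOn_Dθ (hT : 0 < T) (hgC3 : ContDiffOn ℝ 3 (fun q : ℝ × ℝ => g q.1 q.2) (SS T)) :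
    ContinuousOn (fun q : ℝ × ℝ => derivWithin (g q.1) I14 q.2) (SS T) := by
  have h := (DD_contDiffOn hT hgC3 (m := 2) (by norm_num) ((0:ℝ),(1:ℝ))).continuousOn
  exact h.congr fun q hq =>
    derivWithin_slice_snd (hgC3.differentiableOn (by norm_num) q hq) hq

lemma iter2_eq_DD (hT : 0 < T)
    (hPC3 : ContDiffOn ℝ 3 (fun q : ℝ × ℝ => P q.1 q.2) (SS T)) {q : ℝ × ℝ} (hq : q ∈ SS T) :
    iteratedDerivWithin 2 (P q.1) I14 q.2
      = DD T (0,1) (DD T (0,1) (fun q : ℝ × ℝ => P q.1 q.2)) q := by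
  have h2 : ContDiffOn ℝ 2 (DD T (0,1) (fun q : ℝ × ℝ => P q.1 q.2)) (SS T) :=
    DD_contDiffOn hT hPC3 (by norm_num) _
  have e1 : ∀ y ∈ I14, derivWithin (P q.1) I14 y
      = DD T (0,1) (fun q : ℝ × ℝ => P q.1 q.2) (q.1, y) := fun y hy =>
    derivWithin_slice_snd (hPC3.differentiableOn (by norm_num) (q.1, y) ⟨hq.1, hy⟩)
      ⟨hq.1, hy⟩
  rw [iter2_eq hq.2, derivWithin_congr (fun y hy => e1 y hy) (e1 q.2 hq.2)]
  exact derivWithin_slice_snd (h2.differentiableOn (by norm_num) q hq) hq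

lemma contOn_W (hT : 0 < T)
    (hPC3 : ContDiffOn ℝ 3 (fun q : ℝ × ℝ => P q.1 q.2) (SS T)) :
    ContinuousOn (fun q : ℝ × ℝ => P q.1 q.2 + iteratedDerivWithin 2 (P q.1) I14 q.2)
      (SS T) := by
  have h2 : ContDiffOn ℝ 2 (DD T (0,1) (fun q : ℝ × ℝ => P q.1 q.2)) (SS T) :=
    DD_contDiffOn hT hPC3 (by norm_num) _
  have h1 : ContinuousOn (DD T (0,1) (DD T (0,1) (fun q : ℝ × ℝ => P q.1 q.2))) (SS T) :=
    (DD_contDiffOn hT h2 (m := 1) (by norm_num) _).continuousOn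
  exact (hPC3.continuousOn.add h1).congr fun q hq => by
    rw [iter2_eq_DD hT hPC3 hq]; rfl

lemma contOn_min {α : Type*} [TopologicalSpace α] {f h : α → ℝ} {s : Set α}
    (hf : ContinuousOn f s) (hh : ContinuousOn h s) :
    ContinuousOn (fun x => min (f x) (h x)) s :=
  continuous_min.comp_continuousOn (hf.prodMk hh)

end OneDAux

open OneDAux in
set_option maxHeartbeats 2000000 in
/-- **Propagation of positivity and monotonicity for the 1D Boussinesq system
(Lemma 4.3).** For a `C³` solution pair `(g,P)` on `[0,T] × [-π/4,π/4]` with `g(t,·)` odd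
and `P(t,·)` even, the signs `g ≥ 0`, `∂_θ g ≥ 0`, `P ≥ 0`, `∂_θ P ≥ 0` and
`P + ∂_{θθ}P ≥ 0` on `[0,π/4]` are propagated from `t = 0` to all `t ∈ [0,T]`. -/
theorem oneD_boussinesq_positivity
    (T : ℝ) (hT : 0 < T) (g P G : ℝ → ℝ → ℝ)
    (hsol : OneDSol (Icc 0 T) g P G)
    (hgC3 : ContDiffOn ℝ 3 (fun q : ℝ × ℝ => g q.1 q.2) (Icc 0 T ×ˢ I14))
    (hPC3 : ContDiffOn ℝ 3 (fun q : ℝ × ℝ => P q.1 q.2) (Icc 0 T ×ˢ I14))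
    (hg0 : ∀ θ ∈ Icc (0:ℝ) (π/4), 0 ≤ g 0 θ ∧ 0 ≤ derivWithin (g 0) I14 θ)
    (hP0 : ∀ θ ∈ Icc (0:ℝ) (π/4),
      0 ≤ P 0 θ ∧ 0 ≤ derivWithin (P 0) I14 θ ∧
        0 ≤ P 0 θ + iteratedDerivWithin 2 (P 0) I14 θ) :
    ∀ t ∈ Icc (0:ℝ) T, ∀ θ ∈ Icc (0:ℝ) (π/4),
      0 ≤ g t θ ∧ 0 ≤ derivWithin (g t) I14 θ ∧
      0 ≤ P t θ ∧ 0 ≤ derivWithin (P t) I14 θ ∧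
      0 ≤ P t θ + iteratedDerivWithin 2 (P t) I14 θ := by
  have hgC3' : ContDiffOn ℝ 3 (fun q : ℝ × ℝ => g q.1 q.2) (SS T) := hgC3
  have hPC3' : ContDiffOn ℝ 3 (fun q : ℝ × ℝ => P q.1 q.2) (SS T) := hPC3
  have hSScpt : IsCompact (SS T) := isCompact_Icc.prod isCompact_Icc
  have hSSne : ((0:ℝ), (0:ℝ)) ∈ SS T := ⟨⟨le_rfl, le_of_lt hT⟩, zero_mem_I14⟩
  -- sup bounds
  obtain ⟨Mg, hMg⟩ := hSScpt.exists_bound_of_continuousOn hgC3'.continuousOn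
  obtain ⟨MP, hMP⟩ := hSScpt.exists_bound_of_continuousOn hPC3'.continuousOn
  obtain ⟨M2, hM2⟩ := hSScpt.exists_bound_of_continuousOn (contOn_Dθ hT hgC3')
  have hMgnn : 0 ≤ Mg := le_trans (norm_nonneg _) (hMg _ hSSne)
  have hMPnn : 0 ≤ MP := le_trans (norm_nonneg _) (hMP _ hSSne)
  have hM2nn : 0 ≤ M2 := le_trans (norm_nonneg _) (hM2 _ hSSne)
  have hpi : (0:ℝ) < π := pi_pos
  -- G vanishes at 0
  have hG0 : ∀ s ∈ Icc (0:ℝ) T, G s 0 = 0 := by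
    intro s hs
    have := hsol.G_odd s hs 0 zero_mem_I14
    rw [neg_zero] at this; linarith
  -- uniform bounds on G and G'
  have hGbd : ∀ s ∈ Icc (0:ℝ) T, ∀ y ∈ I14,
      |G s y| ≤ π * Mg ∧ |derivWithin (G s) I14 y| ≤ π * Mg := fun s hs =>
    G_uniform_bound (hsol.G_C2 s hs) (hsol.G_eq s hs) (hsol.G_bc₁ s hs) (hG0 s hs)
      (fun y hy => hMg (s, y) ⟨hs, hy⟩)
  set A : ℝ := π * Mg with hA
  have hA0 : 0 ≤ A := by positivity
  set K : ℝ := 5 * A + Mg + M2 + MP + 4 * π * MP + 3 with hK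
  have hK3 : 3 ≤ K := by nlinarith
  -- the minimum of the five tracked quantities
  set Xm : ℝ × ℝ → ℝ := fun q =>
    min (min (g q.1 q.2) (derivWithin (g q.1) I14 q.2))
      (min (min (P q.1 q.2) (derivWithin (P q.1) I14 q.2))
        (P q.1 q.2 + iteratedDerivWithin 2 (P q.1) I14 q.2)) with hXm
  have hXmCont : ContinuousOn Xm (SS T) :=
    contOn_min (contOn_min hgC3'.continuousOn (contOn_Dθ hT hgC3'))
      (contOn_min (contOn_min hPC3'.continuousOn (contOn_Dθ hT hPC3')) (contOn_W hT hPC3'))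
  have hXm_le : ∀ q : ℝ × ℝ,
      Xm q ≤ g q.1 q.2 ∧ Xm q ≤ derivWithin (g q.1) I14 q.2 ∧ Xm q ≤ P q.1 q.2 ∧
      Xm q ≤ derivWithin (P q.1) I14 q.2 ∧
      Xm q ≤ P q.1 q.2 + iteratedDerivWithin 2 (P q.1) I14 q.2 := fun q =>
    ⟨(min_le_left _ _).trans (min_le_left _ _),
     (min_le_left _ _).trans (min_le_right _ _),
     (min_le_right _ _).trans ((min_le_left _ _).trans (min_le_left _ _)),
     (min_le_right _ _).trans ((min_le_left _ _).trans (min_le_right _ _)),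
     (min_le_right _ _).trans (min_le_right _ _)⟩
  have hinit : ∀ y ∈ Icc (0:ℝ) (π/4), 0 ≤ Xm (0, y) := by
    intro y hy
    obtain ⟨h1, h2⟩ := hg0 y hy
    obtain ⟨h3, h4, h5⟩ := hP0 y hy
    exact le_min (le_min h1 h2) (le_min (le_min h3 h4) h5)
  -- MAIN CLAIM
  have key : ∀ ε : ℝ, 0 < ε → ∀ q ∈ Icc (0:ℝ) T ×ˢ Icc (0:ℝ) (π/4),
      0 < Xm q + ε * Real.exp (K * q.1) := by
    intro ε hε
    by_contra hcon
    push_neg at hcon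
    obtain ⟨qbad, hqbadK, hqbad0⟩ := hcon
    set B : Set (ℝ × ℝ) := (Icc (0:ℝ) T ×ˢ Icc (0:ℝ) (π/4)) ∩
      {q | Xm q + ε * Real.exp (K * q.1) ≤ 0} with hB
    have hK0sub : Icc (0:ℝ) T ×ˢ Icc (0:ℝ) (π/4) ⊆ SS T :=
      prod_mono subset_rfl I14_sub
    have hΦcont : ContinuousOn (fun q : ℝ × ℝ => Xm q + ε * Real.exp (K * q.1))
        (Icc (0:ℝ) T ×ˢ Icc (0:ℝ) (π/4)) :=
      (hXmCont.mono hK0sub).add (continuous_const.mul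
        (Real.continuous_exp.comp (continuous_const.mul continuous_fst))).continuousOn
    have hBclosed : IsClosed B :=
      hΦcont.preimage_isClosed_of_isClosed (isClosed_Icc.prod isClosed_Icc) isClosed_Iic
    have hBcpt : IsCompact B :=
      (isCompact_Icc.prod isCompact_Icc).of_isClosed_subset hBclosed inter_subset_left
    have hBne : B.Nonempty := ⟨qbad, hqbadK, hqbad0⟩
    obtain ⟨q0, hq0B, hq0fst⟩ := (hBcpt.image continuous_fst).sInf_mem (hBne.image _)
    have hmint0 : ∀ q' ∈ B, q0.1 ≤ q'.1 := fun q' h => by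
      rw [hq0fst]
      exact csInf_le (hBcpt.image continuous_fst).bddBelow ⟨q', h, rfl⟩
    clear hq0fst
    obtain ⟨t0, θ0⟩ := q0
    obtain ⟨⟨ht0T, hθ0⟩, hineq0⟩ := hq0B
    replace ht0T : t0 ∈ Icc (0:ℝ) T := ht0T
    replace hθ0 : θ0 ∈ Icc (0:ℝ) (π/4) := hθ0
    replace hineq0 : Xm (t0, θ0) + ε * Real.exp (K * t0) ≤ 0 := hineq0
    have hexp0 : (0:ℝ) < Real.exp (K * t0) := Real.exp_pos _
    -- t0 > 0
    have ht0pos : 0 < t0 := by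
      rcases eq_or_lt_of_le ht0T.1 with h | h
      · exfalso
        have h1 := hinit θ0 hθ0
        have h2 : Xm (t0, θ0) + ε * Real.exp (K * t0) ≤ 0 := hineq0
        rw [← h] at h2
        simp only [mul_zero, Real.exp_zero, mul_one] at h2
        linarith
      · exact h
    set δ : ℝ := ε * Real.exp (K * t0) with hδ
    have hδpos : 0 < δ := mul_pos hε hexp0
    -- before t0 everything is strictly above the barrier
    have hbefore : ∀ s ∈ Icc (0:ℝ) T, ∀ y ∈ Icc (0:ℝ) (π/4), s < t0 →
        0 < Xm (s, y) + ε * Real.exp (K * s) := by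
      intro s hs y hy hst
      by_contra hle
      push_neg at hle
      exact absurd (hmint0 (s, y) ⟨⟨hs, hy⟩, hle⟩) (not_le.2 hst)
    -- at time t0 everything is at least -δ
    have hXmT0 : ∀ y ∈ Icc (0:ℝ) (π/4), -δ ≤ Xm (t0, y) := by
      intro y hy
      have hcont : ContinuousOn (fun s => Xm (s, y) + ε * Real.exp (K * s)) (Icc 0 T) := by
        refine ContinuousOn.add ?_ (continuous_const.mul
          (Real.continuous_exp.comp (continuous_const.mul continuous_id))).continuousOn
        exact hXmCont.comp (continuous_id.prodMk continuous_const).continuousOn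
          (fun s hs => ⟨hs, I14_sub hy⟩)
      have hne : (𝓝[Ico (0:ℝ) t0] t0).NeBot :=
        mem_closure_iff_nhdsWithin_neBot.1
          (by rw [closure_Ico ht0pos.ne]; exact ⟨le_of_lt ht0pos, le_rfl⟩)
      have htend : Filter.Tendsto (fun s => Xm (s, y) + ε * Real.exp (K * s))
          (𝓝[Ico (0:ℝ) t0] t0) (𝓝 (Xm (t0, y) + ε * Real.exp (K * t0))) :=
        (hcont t0 ht0T).mono (fun s hs => ⟨hs.1, le_trans (le_of_lt hs.2) ht0T.2⟩) |>.tendsto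
      have hge : 0 ≤ Xm (t0, y) + ε * Real.exp (K * t0) := by
        refine ge_of_tendsto htend ?_
        filter_upwards [self_mem_nhdsWithin] with s hs
        exact (hbefore s ⟨hs.1, le_trans (le_of_lt hs.2) ht0T.2⟩ y hy hs.2).le
      linarith
    have hXall : ∀ y ∈ Icc (0:ℝ) (π/4),
        -δ ≤ g t0 y ∧ -δ ≤ derivWithin (g t0) I14 y ∧ -δ ≤ P t0 y ∧
        -δ ≤ derivWithin (P t0) I14 y ∧
        -δ ≤ P t0 y + iteratedDerivWithin 2 (P t0) I14 y := by
      intro y hy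
      have h := hXmT0 y hy
      obtain ⟨a1, a2, a3, a4, a5⟩ := hXm_le (t0, y)
      exact ⟨le_trans h a1, le_trans h a2, le_trans h a3, le_trans h a4, le_trans h a5⟩
    -- the minimum attains -δ at (t0, θ0) in one of the five components
    have hminle : Xm (t0, θ0) ≤ -δ := by linarith
    have hGA := hGbd t0 ht0T
    have hθ0I : θ0 ∈ I14 := I14_sub hθ0
    -- sign bound for G at time t0
    have hsign : ∀ y ∈ Icc (0:ℝ) (π/4), G t0 y ≤ π * δ :=
      G_sign (hsol.G_C2 t0 ht0T) (hsol.G_eq t0 ht0T) (hsol.G_bc₁ t0 ht0T) (hG0 t0 ht0T)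
        (le_of_lt hδpos) (fun y hy => (hXall y hy).1)
    -- case analysis on which component attains the minimum
    have hcases : g t0 θ0 ≤ -δ ∨ derivWithin (g t0) I14 θ0 ≤ -δ ∨ P t0 θ0 ≤ -δ ∨
        derivWithin (P t0) I14 θ0 ≤ -δ ∨
        P t0 θ0 + iteratedDerivWithin 2 (P t0) I14 θ0 ≤ -δ := by
      simp only [hXm, min_le_iff] at hminle
      tauto
    -- common quantities
    have hKδ : ε * (Real.exp (K * t0) * K) = K * δ := by rw [hδ]; ring
    obtain ⟨hGθlb, hGθub⟩ := abs_le.1 (hGbd t0 ht0T θ0 hθ0I).2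
    obtain ⟨hGlb, hGub⟩ := abs_le.1 (hGbd t0 ht0T θ0 hθ0I).1
    have hgabs : |g t0 θ0| ≤ Mg := hMg (t0, θ0) ⟨ht0T, hθ0I⟩
    have hPabs : |P t0 θ0| ≤ MP := hMP (t0, θ0) ⟨ht0T, hθ0I⟩
    have h2abs : |derivWithin (g t0) I14 θ0| ≤ M2 := hM2 (t0, θ0) ⟨ht0T, hθ0I⟩
    have hsθ0 : 0 ≤ Real.sin θ0 :=
      Real.sin_nonneg_of_nonneg_of_le_pi hθ0.1 (by linarith [hθ0.2])
    have hsθ1 : Real.sin θ0 ≤ 1 := Real.sin_le_one _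
    have hcθ0 : 0 ≤ Real.cos θ0 :=
      Real.cos_nonneg_of_mem_Icc ⟨by linarith [hθ0.1], by linarith [hθ0.2]⟩
    have hcθ1 : Real.cos θ0 ≤ 1 := Real.cos_le_one _
    obtain ⟨hXa1, hXa2, hXa3, hXa4, hXa5⟩ := hXall θ0 hθ0
    have hGθδ : (-A) * δ ≤ derivWithin (G t0) I14 θ0 * δ :=
      mul_le_mul_of_nonneg_right hGθlb hδpos.le
    have hGθδu : derivWithin (G t0) I14 θ0 * δ ≤ A * δ :=
      mul_le_mul_of_nonneg_right hGθub hδpos.le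
    rcases hcases with hc | hc | hc | hc | hc
    · -- case 1 : g touches -δ
      have heq : g t0 θ0 = -δ := le_antisymm hc hXa1
      have hev := (evolution_g hsol ht0T hθ0I).add (exp_hasDeriv (K := K) (ε := ε) (t0 := t0) (T := T))
      have hz : g t0 θ0 + ε * Real.exp (K * t0) = 0 := by rw [heq, hδ]; ring
      have hrnn : ∀ s ∈ Icc (0:ℝ) t0, 0 ≤ g s θ0 + ε * Real.exp (K * s) := by
        intro s hs
        rcases lt_or_eq_of_le hs.2 with hlt | hE
        · have h0 := hbefore s ⟨hs.1, le_trans hs.2 ht0T.2⟩ θ0 hθ0 hlt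
          have h2 : Xm (s, θ0) ≤ g s θ0 := (hXm_le (s, θ0)).1
          linarith
        · rw [hE]; linarith [hz]
      have hL := deriv_nonpos_first_zero ht0pos ht0T hev hrnn hz
      have hmin : ∀ y ∈ Icc (0:ℝ) (π/4), g t0 θ0 ≤ g t0 y := fun y hy =>
        heq ▸ (hXall y hy).1
      have htz : 2 * G t0 θ0 * derivWithin (g t0) I14 θ0 = 0 :=
        transport_zero (hG0 t0 ht0T) (hsol.G_bc₁ t0 ht0T) hθ0 hmin
      rw [htz, hKδ] at hL
      have hb1 : -δ ≤ Real.sin θ0 * P t0 θ0 := prod_lb1 hsθ0 hsθ1 hXa3 hδpos.le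
      have hb2 : -δ ≤ Real.cos θ0 * derivWithin (P t0) I14 θ0 :=
        prod_lb1 hcθ0 hcθ1 hXa4 hδpos.le
      have hKp : 3 * δ ≤ K * δ := mul_le_mul_of_nonneg_right hK3 hδpos.le
      linarith only [hL, hb1, hb2, hKp, hδpos]
    · -- case 2 : ∂θ g touches -δ
      have heq : derivWithin (g t0) I14 θ0 = -δ := le_antisymm hc hXa2
      have hev := (evolution_gθ hT hsol hgC3' hPC3' ht0T hθ0I).add
        (exp_hasDeriv (K := K) (ε := ε) (t0 := t0) (T := T))
      have hz : derivWithin (g t0) I14 θ0 + ε * Real.exp (K * t0) = 0 := by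
        rw [heq, hδ]; ring
      have hrnn : ∀ s ∈ Icc (0:ℝ) t0,
          0 ≤ derivWithin (g s) I14 θ0 + ε * Real.exp (K * s) := by
        intro s hs
        rcases lt_or_eq_of_le hs.2 with hlt | hE
        · have h0 := hbefore s ⟨hs.1, le_trans hs.2 ht0T.2⟩ θ0 hθ0 hlt
          have h2 : Xm (s, θ0) ≤ derivWithin (g s) I14 θ0 := (hXm_le (s, θ0)).2.1
          linarith
        · rw [hE]; linarith [hz]
      have hL := deriv_nonpos_first_zero ht0pos ht0T hev hrnn hz
      have hmin : ∀ y ∈ Icc (0:ℝ) (π/4),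
          derivWithin (g t0) I14 θ0 ≤ derivWithin (g t0) I14 y := fun y hy =>
        heq ▸ (hXall y hy).2.1
      have htz : 2 * G t0 θ0 * iteratedDerivWithin 2 (g t0) I14 θ0 = 0 := by
        rw [iter2_eq hθ0I]
        exact transport_zero (hG0 t0 ht0T) (hsol.G_bc₁ t0 ht0T) hθ0 hmin
      rw [htz, hKδ, heq] at hL
      have hb1 : -δ ≤ Real.cos θ0 * (P t0 θ0 + iteratedDerivWithin 2 (P t0) I14 θ0) :=
        prod_lb1 hcθ0 hcθ1 hXa5 hδpos.le
      have hKp : (2 * A + 2) * δ ≤ K * δ := by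
        apply mul_le_mul_of_nonneg_right _ hδpos.le
        rw [hK]
        nlinarith [mul_nonneg hpi.le hMPnn]
      linarith only [hL, hb1, hGθδ, hKp, hδpos]
    · -- case 3 : P touches -δ
      have heq : P t0 θ0 = -δ := le_antisymm hc hXa3
      have hev := (evolution_P' hsol ht0T hθ0I).add
        (exp_hasDeriv (K := K) (ε := ε) (t0 := t0) (T := T))
      have hz : P t0 θ0 + ε * Real.exp (K * t0) = 0 := by rw [heq, hδ]; ring
      have hrnn : ∀ s ∈ Icc (0:ℝ) t0, 0 ≤ P s θ0 + ε * Real.exp (K * s) := by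
        intro s hs
        rcases lt_or_eq_of_le hs.2 with hlt | hE
        · have h0 := hbefore s ⟨hs.1, le_trans hs.2 ht0T.2⟩ θ0 hθ0 hlt
          have h2 : Xm (s, θ0) ≤ P s θ0 := (hXm_le (s, θ0)).2.2.1
          linarith
        · rw [hE]; linarith [hz]
      have hL := deriv_nonpos_first_zero ht0pos ht0T hev hrnn hz
      have hmin : ∀ y ∈ Icc (0:ℝ) (π/4), P t0 θ0 ≤ P t0 y := fun y hy =>
        heq ▸ (hXall y hy).2.2.1
      have htz : 2 * G t0 θ0 * derivWithin (P t0) I14 θ0 = 0 :=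
        transport_zero (hG0 t0 ht0T) (hsol.G_bc₁ t0 ht0T) hθ0 hmin
      rw [htz, hKδ, heq] at hL
      have hKp : (A + 1) * δ ≤ K * δ := by
        apply mul_le_mul_of_nonneg_right _ hδpos.le
        rw [hK]
        nlinarith [mul_nonneg hpi.le hMPnn]
      linarith only [hL, hGθδu, hKp, hδpos]
    · -- case 4 : ∂θ P touches -δ
      have heq : derivWithin (P t0) I14 θ0 = -δ := le_antisymm hc hXa4
      have hev := (evolution_Pθ hT hsol hPC3' ht0T hθ0I).add
        (exp_hasDeriv (K := K) (ε := ε) (t0 := t0) (T := T))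
      have hz : derivWithin (P t0) I14 θ0 + ε * Real.exp (K * t0) = 0 := by
        rw [heq, hδ]; ring
      have hrnn : ∀ s ∈ Icc (0:ℝ) t0,
          0 ≤ derivWithin (P s) I14 θ0 + ε * Real.exp (K * s) := by
        intro s hs
        rcases lt_or_eq_of_le hs.2 with hlt | hE
        · have h0 := hbefore s ⟨hs.1, le_trans hs.2 ht0T.2⟩ θ0 hθ0 hlt
          have h2 : Xm (s, θ0) ≤ derivWithin (P s) I14 θ0 := (hXm_le (s, θ0)).2.2.2.1
          linarith
        · rw [hE]; linarith [hz]
      have hL := deriv_nonpos_first_zero ht0pos ht0T hev hrnn hz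
      have hmin : ∀ y ∈ Icc (0:ℝ) (π/4),
          derivWithin (P t0) I14 θ0 ≤ derivWithin (P t0) I14 y := fun y hy =>
        heq ▸ (hXall y hy).2.2.2.1
      have htz : 2 * G t0 θ0 * iteratedDerivWithin 2 (P t0) I14 θ0 = 0 := by
        rw [iter2_eq hθ0I]
        exact transport_zero (hG0 t0 ht0T) (hsol.G_bc₁ t0 ht0T) hθ0 hmin
      rw [htz, hKδ, heq] at hL
      -- bound on the zeroth order coefficient g - 4G
      have hsgn : G t0 θ0 ≤ π * δ := hsign θ0 hθ0
      obtain ⟨hglb', hgub'⟩ := abs_le.1 hgabs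
      obtain ⟨hPlb', hPub'⟩ := abs_le.1 hPabs
      have hcx : -((δ + 4*π*δ) * MP + (Mg + 4*A) * δ)
          ≤ (g t0 θ0 - 4 * G t0 θ0) * P t0 θ0 := by
        refine corner_bound (by linarith) (by linarith) (by linarith) hPub'
          (by positivity) (by positivity) hδpos.le hMPnn
      have hKp : (5*A + Mg + MP + 4*π*MP + 1) * δ ≤ K * δ := by
        apply mul_le_mul_of_nonneg_right _ hδpos.le
        rw [hK]
        linarith [hM2nn]
      have hA' : A = π * Mg := hA
      linarith only [hL, hcx, hGθδ, hKp, hδpos]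
    · -- case 5 : P + ∂θθ P touches -δ
      have heq : P t0 θ0 + iteratedDerivWithin 2 (P t0) I14 θ0 = -δ := le_antisymm hc hXa5
      have hev := (evolution_W hT hsol hgC3' hPC3' ht0T hθ0I).add
        (exp_hasDeriv (K := K) (ε := ε) (t0 := t0) (T := T))
      have hz : P t0 θ0 + iteratedDerivWithin 2 (P t0) I14 θ0 + ε * Real.exp (K * t0) = 0 := by
        rw [heq, hδ]; ring
      have hrnn : ∀ s ∈ Icc (0:ℝ) t0,
          0 ≤ P s θ0 + iteratedDerivWithin 2 (P s) I14 θ0 + ε * Real.exp (K * s) := by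
        intro s hs
        rcases lt_or_eq_of_le hs.2 with hlt | hE
        · have h0 := hbefore s ⟨hs.1, le_trans hs.2 ht0T.2⟩ θ0 hθ0 hlt
          have h2 : Xm (s, θ0) ≤ P s θ0 + iteratedDerivWithin 2 (P s) I14 θ0 :=
            (hXm_le (s, θ0)).2.2.2.2
          linarith
        · rw [hE]; linarith [hz]
      have hL' := deriv_nonpos_first_zero ht0pos ht0T hev hrnn hz
      have hmin : ∀ y ∈ Icc (0:ℝ) (π/4),
          P t0 θ0 + iteratedDerivWithin 2 (P t0) I14 θ0
            ≤ P t0 y + iteratedDerivWithin 2 (P t0) I14 y := fun y hy =>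
        heq ▸ (hXall y hy).2.2.2.2
      have htz : 2 * G t0 θ0 * (derivWithin (P t0) I14 θ0
          + iteratedDerivWithin 3 (P t0) I14 θ0) = 0 := by
        rw [← spatial_deriv_W hsol hPC3' ht0T hθ0I]
        exact transport_zero (hG0 t0 ht0T) (hsol.G_bc₁ t0 ht0T) hθ0 hmin
      rw [htz, hKδ, heq] at hL'
      obtain ⟨hPlb', hPub'⟩ := abs_le.1 hPabs
      obtain ⟨h2lb', h2ub'⟩ := abs_le.1 h2abs
      have hcx : -(δ * M2 + MP * δ) ≤ P t0 θ0 * derivWithin (g t0) I14 θ0 :=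
        corner_bound hXa3 hPub' hXa2 h2ub' hδpos.le hMPnn hδpos.le hM2nn
      have hKp : (3*A + M2 + MP + 1) * δ ≤ K * δ := by
        apply mul_le_mul_of_nonneg_right _ hδpos.le
        rw [hK]
        nlinarith [mul_nonneg hpi.le hMPnn]
      linarith only [hL', hcx, hGθδ, hKp, hδpos]

  -- conclude, letting ε → 0
  intro t ht θ hθ
  have hXmnn : 0 ≤ Xm (t, θ) := by
    by_contra hneg
    push_neg at hneg
    have hexp : (0:ℝ) < Real.exp (K * t) := Real.exp_pos _
    set ε0 : ℝ := -Xm (t, θ) / (2 * Real.exp (K * t)) with hε0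
    have hε0pos : 0 < ε0 := by
      apply div_pos (by linarith) (by positivity)
    have h := key ε0 hε0pos (t, θ) ⟨ht, hθ⟩
    replace h : 0 < Xm (t, θ) + ε0 * Real.exp (K * t) := h
    have he : ε0 * Real.exp (K * t) = -Xm (t, θ) / 2 := by
      rw [hε0, div_mul_eq_mul_div, mul_div_mul_right _ _ hexp.ne']
    rw [he] at h
    linarith
  obtain ⟨a1, a2, a3, a4, a5⟩ := hXm_le (t, θ)
  exact ⟨le_trans hXmnn a1, le_trans hXmnn a2, le_trans hXmnn a3, le_trans hXmnn a4,
    le_trans hXmnn a5⟩
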